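/- arXiv:1712.04122 — 2 statements merged into one kernel-verified Lean document; each statement's English description precedes it below -/
import Mathlib

section
/- Let V be a nonempty finite index set and for each ω ∈ V let W_ω be an n×n real symmetric positive semidefinite matrix; set W_S := ∑_{ω ∈ S} W_ω and f(S) := λ_n(W_S). Assume max_{ω ∈ V} λ_1(W_ω) > 0 and let γ₀ := (min_{ω ∈ V} λ_n(W_ω)) / (max_{ω ∈ V} λ_1(W_ω)). Then for all Ω, S ⊆ V and every j ∈ S \ Ω: f(S ∪ Ω) − f((S \ {j}) ∪ Ω) ≥ γ₀ · [f(S) − f(S \ {j})]. In particular, the curvature of f is at most 1 − γ₀. -/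
open Classical in
/-- Smallest eigenvalue of a real symmetric matrix (junk value `0` if not symmetric). -/
noncomputable def lambdaMin {n : ℕ} (M : Matrix (Fin n) (Fin n) ℝ) : ℝ :=
  if h : M.IsHermitian then ⨅ i, h.eigenvalues i else 0

open Classical in
/-- Largest eigenvalue of a real symmetric matrix (junk value `0` if not symmetric). -/
noncomputable def lambdaMax {n : ℕ} (M : Matrix (Fin n) (Fin n) ℝ) : ℝ :=
  if h : M.IsHermitian then ⨆ i, h.eigenvalues i else 0

open Matrix

section helpers
variable {n : ℕ}

lemma quad_eq_sum {M : Matrix (Fin n) (Fin n) ℝ} (hM : M.IsHermitian) (x : Fin n → ℝ) :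
    x ⬝ᵥ (M *ᵥ x) =
      ∑ i, hM.eigenvalues i *
        ((star (hM.eigenvectorUnitary : Matrix (Fin n) (Fin n) ℝ) *ᵥ x) i) ^ 2 := by
  set U := (hM.eigenvectorUnitary : Matrix (Fin n) (Fin n) ℝ) with hU
  have hstar : star U = Uᵀ := by
    rw [Matrix.star_eq_conjTranspose, Matrix.conjTranspose_eq_transpose_of_trivial]
  set y := star U *ᵥ x with hy
  conv_lhs => rw [hM.spectral_theorem, Unitary.conjStarAlgAut_apply]
  rw [← hU]
  rw [← Matrix.mulVec_mulVec, ← Matrix.mulVec_mulVec, Matrix.dotProduct_mulVec x U,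
    ← Matrix.mulVec_transpose, ← hstar, ← hy]
  simp [Matrix.mulVec_diagonal, dotProduct, mul_comm, sq, mul_assoc, mul_left_comm]

lemma sq_eq_sum {M : Matrix (Fin n) (Fin n) ℝ} (hM : M.IsHermitian) (x : Fin n → ℝ) :
    x ⬝ᵥ x = ∑ i, ((star (hM.eigenvectorUnitary : Matrix (Fin n) (Fin n) ℝ) *ᵥ x) i) ^ 2 := by
  set U := (hM.eigenvectorUnitary : Matrix (Fin n) (Fin n) ℝ) with hU
  have hstar : star U = Uᵀ := by
    rw [Matrix.star_eq_conjTranspose, Matrix.conjTranspose_eq_transpose_of_trivial]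
  have h1 : U * star U = 1 := (Matrix.mem_unitaryGroup_iff).mp hM.eigenvectorUnitary.2
  have : (star U *ᵥ x) ⬝ᵥ (star U *ᵥ x) = x ⬝ᵥ x := by
    nth_rewrite 1 [hstar]
    rw [Matrix.mulVec_transpose, ← Matrix.dotProduct_mulVec, Matrix.mulVec_mulVec,
      h1, Matrix.one_mulVec]
  rw [← this]
  simp [dotProduct, sq]

lemma lambdaMin_mul_le_quad {M : Matrix (Fin n) (Fin n) ℝ} (hM : M.IsHermitian)
    (x : Fin n → ℝ) : lambdaMin M * (x ⬝ᵥ x) ≤ x ⬝ᵥ (M *ᵥ x) := by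
  rw [lambdaMin, dif_pos hM, quad_eq_sum hM x, sq_eq_sum hM x, Finset.mul_sum]
  exact Finset.sum_le_sum fun i _ =>
    mul_le_mul_of_nonneg_right (ciInf_le (Finite.bddBelow_range _) i) (sq_nonneg _)

lemma quad_le_lambdaMax_mul {M : Matrix (Fin n) (Fin n) ℝ} (hM : M.IsHermitian)
    (x : Fin n → ℝ) : x ⬝ᵥ (M *ᵥ x) ≤ lambdaMax M * (x ⬝ᵥ x) := by
  rw [lambdaMax, dif_pos hM, quad_eq_sum hM x, sq_eq_sum hM x, Finset.mul_sum]
  exact Finset.sum_le_sum fun i _ =>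
    mul_le_mul_of_nonneg_right (le_ciSup (Finite.bddAbove_range _) i) (sq_nonneg _)

lemma exists_unit_quad_eq_lambdaMin (hn : 0 < n) {M : Matrix (Fin n) (Fin n) ℝ}
    (hM : M.IsHermitian) : ∃ x : Fin n → ℝ, x ⬝ᵥ x = 1 ∧ x ⬝ᵥ (M *ᵥ x) = lambdaMin M := by
  have : Nonempty (Fin n) := ⟨⟨0, hn⟩⟩
  obtain ⟨i₀, hi₀⟩ := Finite.exists_min hM.eigenvalues
  have hmin : lambdaMin M = hM.eigenvalues i₀ := by
    rw [lambdaMin, dif_pos hM]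
    exact le_antisymm (ciInf_le (Finite.bddBelow_range _) i₀) (le_ciInf hi₀)
  refine ⟨⇑(hM.eigenvectorBasis i₀), ?_, ?_⟩
  · rw [sq_eq_sum hM, hM.star_eigenvectorUnitary_mulVec i₀]
    simp [Pi.single_apply, Finset.sum_ite_eq']
  · rw [quad_eq_sum hM, hM.star_eigenvectorUnitary_mulVec i₀, hmin]
    simp [Pi.single_apply, Finset.sum_ite_eq']

lemma weyl_lower (hn : 0 < n) {A B : Matrix (Fin n) (Fin n) ℝ}
    (hA : A.IsHermitian) (hB : B.IsHermitian) :
    lambdaMin A + lambdaMin B ≤ lambdaMin (A + B) := by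
  obtain ⟨x, hx1, hx2⟩ := exists_unit_quad_eq_lambdaMin hn (hA.add hB)
  have := lambdaMin_mul_le_quad hA x
  have := lambdaMin_mul_le_quad hB x
  rw [hx1] at *
  have hsum : x ⬝ᵥ ((A + B) *ᵥ x) = x ⬝ᵥ (A *ᵥ x) + x ⬝ᵥ (B *ᵥ x) := by
    rw [Matrix.add_mulVec, dotProduct_add]
  linarith

lemma weyl_upper (hn : 0 < n) {A B : Matrix (Fin n) (Fin n) ℝ}
    (hA : A.IsHermitian) (hB : B.IsHermitian) :
    lambdaMin (A + B) ≤ lambdaMin A + lambdaMax B := by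
  obtain ⟨x, hx1, hx2⟩ := exists_unit_quad_eq_lambdaMin hn hA
  have h1 := lambdaMin_mul_le_quad (hA.add hB) x
  have h2 := quad_le_lambdaMax_mul hB x
  rw [hx1] at *
  have hsum : x ⬝ᵥ ((A + B) *ᵥ x) = x ⬝ᵥ (A *ᵥ x) + x ⬝ᵥ (B *ᵥ x) := by
    rw [Matrix.add_mulVec, dotProduct_add]
  linarith

lemma lambdaMin_nonneg {M : Matrix (Fin n) (Fin n) ℝ} (hM : M.PosSemidef) :
    0 ≤ lambdaMin M := by
  rw [lambdaMin, dif_pos hM.1]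
  exact Real.iInf_nonneg fun i => hM.eigenvalues_nonneg i

end helpers


lemma posSemidef_sum {n : ℕ} {V : Type*} [DecidableEq V] (W : V → Matrix (Fin n) (Fin n) ℝ)
    (hW : ∀ ω, (W ω).PosSemidef) (s : Finset V) : (∑ i ∈ s, W i).PosSemidef :=
  Finset.sum_induction W _ (fun _ _ ha hb => ha.add hb) Matrix.PosSemidef.zero fun i _ => hW i

/-- Upper bound `1 - γ₀` (with `γ₀ = min_ω λ_min(W_ω) / max_ω λ_max(W_ω)`) on the curvature
of the set function `S ↦ λ_min(W_S)` with `W_S = ∑_{ω ∈ S} W_ω`. -/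
theorem lambdaMin_gramian_curvature
    {n : ℕ} (hn : 0 < n) {V : Type*} [Fintype V] [DecidableEq V] [Nonempty V]
    (W : V → Matrix (Fin n) (Fin n) ℝ) (hW : ∀ ω, (W ω).PosSemidef)
    (hmax : 0 < ⨆ ω : V, lambdaMax (W ω)) :
    ∀ Ω S : Finset V, ∀ j ∈ S \ Ω,
      lambdaMin (∑ i ∈ S ∪ Ω, W i) - lambdaMin (∑ i ∈ (S.erase j) ∪ Ω, W i) ≥
        ((⨅ ω : V, lambdaMin (W ω)) / (⨆ ω : V, lambdaMax (W ω))) *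
          (lambdaMin (∑ i ∈ S, W i) - lambdaMin (∑ i ∈ S.erase j, W i)) := by
  intro Ω S j hj
  obtain ⟨hjS, hjΩ⟩ := Finset.mem_sdiff.mp hj
  set γnum := ⨅ ω : V, lambdaMin (W ω) with hγnum
  set γden := ⨆ ω : V, lambdaMax (W ω) with hγden
  have hγnum0 : 0 ≤ γnum := Real.iInf_nonneg fun ω => lambdaMin_nonneg (hW ω)
  -- split the unions
  have hjnot : j ∉ (S.erase j) ∪ Ω := by
    simp [Finset.mem_union, hjΩ]
  have hsplit1 : S ∪ Ω = insert j ((S.erase j) ∪ Ω) := by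
    rw [← Finset.insert_union, Finset.insert_erase hjS]
  have hjnot2 : j ∉ S.erase j := Finset.notMem_erase j S
  have hsplit2 : S = insert j (S.erase j) := (Finset.insert_erase hjS).symm
  have hsum1 : ∑ i ∈ S ∪ Ω, W i = W j + ∑ i ∈ (S.erase j) ∪ Ω, W i := by
    rw [hsplit1, Finset.sum_insert hjnot]
  have hsum2 : ∑ i ∈ S, W i = W j + ∑ i ∈ S.erase j, W i := by
    conv_lhs => rw [hsplit2]
    rw [Finset.sum_insert hjnot2]
  set A := ∑ i ∈ (S.erase j) ∪ Ω, W i with hA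
  set C := ∑ i ∈ S.erase j, W i with hC
  have hAps := posSemidef_sum W hW ((S.erase j) ∪ Ω)
  have hCps := posSemidef_sum W hW (S.erase j)
  have hBps := hW j
  -- bounds
  have h1 : γnum ≤ lambdaMin (W j) := ciInf_le (Finite.bddBelow_range fun ω => lambdaMin (W ω)) j
  have h2 : lambdaMax (W j) ≤ γden := le_ciSup (Finite.bddAbove_range fun ω => lambdaMax (W ω)) j
  have hL : lambdaMin (W j) + lambdaMin A ≤ lambdaMin (W j + A) := by
    have := weyl_lower hn hBps.1 hAps.1
    linarith [this]
  have hDle : lambdaMin (W j + C) ≤ lambdaMin C + lambdaMax (W j) := by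
    have := weyl_upper hn hCps.1 hBps.1
    linarith [add_comm (W j) C ▸ this]
  have hDge : lambdaMin C + lambdaMin (W j) ≤ lambdaMin (W j + C) := by
    have := weyl_lower hn hBps.1 hCps.1
    linarith
  rw [hsum1, hsum2]
  set D := lambdaMin (W j + C) - lambdaMin C with hD
  have hD0 : 0 ≤ D := by
    have := lambdaMin_nonneg hBps; linarith
  have hDden : D ≤ γden := by linarith
  have key : γnum / γden * D ≤ γnum := by
    calc γnum / γden * D ≤ γnum / γden * γden :=
          mul_le_mul_of_nonneg_left hDden (div_nonneg hγnum0 hmax.le)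
      _ = γnum := div_mul_cancel₀ _ (ne_of_gt hmax)
  have : γnum ≤ lambdaMin (W j + A) - lambdaMin A := by linarith
  linarith
end

section
/- Let V be a nonempty finite index set, W_0 an n×n real symmetric positive definite matrix, and for each ω ∈ V let W_ω be an n×n real symmetric positive semidefinite matrix; set W̄_S := W_0 + ∑_{ω ∈ S} W_ω. Then for all Ω, S ⊆ V and every j ∈ S \ Ω: tr(W̄_{(S \ {j}) ∪ Ω}^{−1}) − tr(W̄_{S ∪ Ω}^{−1}) ≥ tr(W_j) / λ_1(W̄_V)² ≥ (min_{ω ∈ V} tr(W_ω)) / λ_1(W̄_V)². -/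
open Matrix

section Aux

variable {n : ℕ}

private lemma auxSpectral {M : Matrix (Fin n) (Fin n) ℝ} (hM : M.IsHermitian) :
    M = (hM.eigenvectorUnitary : Matrix (Fin n) (Fin n) ℝ) * Matrix.diagonal hM.eigenvalues *
      star (hM.eigenvectorUnitary : Matrix (Fin n) (Fin n) ℝ) := by
  have := hM.spectral_theorem
  simpa [RCLike.ofReal_real_eq_id] using this

private lemma auxConjSmulOne {U : Matrix (Fin n) (Fin n) ℝ} (hU : U * star U = 1) (c : ℝ) :
    U * (c • (1 : Matrix (Fin n) (Fin n) ℝ)) * star U = c • 1 := by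
  rw [Matrix.mul_smul, Matrix.smul_mul, mul_one, hU]

private lemma auxConjMul {U : Matrix (Fin n) (Fin n) ℝ} (hU' : star U * U = 1)
    (d e : Fin n → ℝ) :
    (U * Matrix.diagonal d * star U) * (U * Matrix.diagonal e * star U)
      = U * Matrix.diagonal (fun i => d i * e i) * star U := by
  have h1 : U * Matrix.diagonal d * star U * (U * Matrix.diagonal e * star U)
      = U * Matrix.diagonal d * (star U * U) * Matrix.diagonal e * star U := by
    noncomm_ring
  rw [h1, hU', mul_one, mul_assoc U, Matrix.diagonal_mul_diagonal]

private lemma auxPsdTraceNonneg {M : Matrix (Fin n) (Fin n) ℝ} (hM : M.PosSemidef) :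
    0 ≤ M.trace := by
  rw [Matrix.trace]
  refine Finset.sum_nonneg fun i _ => ?_
  have := hM.dotProduct_mulVec_nonneg (Pi.single i 1)
  simpa [dotProduct, Matrix.mulVec, Pi.single_apply, Finset.mul_sum] using this

open scoped MatrixOrder in
private lemma auxPsdTraceMulNonneg {P Q : Matrix (Fin n) (Fin n) ℝ}
    (hP : P.PosSemidef) (hQ : Q.PosSemidef) : 0 ≤ (P * Q).trace := by
  have h : (P * Q).trace = (CFC.sqrt Q * P * CFC.sqrt Q).trace := by
    conv_lhs => rw [← CFC.sqrt_mul_sqrt_self Q hQ.nonneg, ← mul_assoc]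
    rw [Matrix.trace_mul_cycle]
  rw [h]
  refine auxPsdTraceNonneg ?_
  have h2 := hP.mul_mul_conjTranspose_same (CFC.sqrt Q)
  rwa [(CFC.sqrt_nonneg Q).posSemidef.isHermitian.eq] at h2

private lemma auxSmulOneSubPsd {M : Matrix (Fin n) (Fin n) ℝ} (hM : M.IsHermitian) {L : ℝ}
    (h : ∀ i, hM.eigenvalues i ≤ L) :
    ((L • 1 : Matrix (Fin n) (Fin n) ℝ) - M).PosSemidef := by
  set U := (hM.eigenvectorUnitary : Matrix (Fin n) (Fin n) ℝ) with hUdef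
  have hU : U * star U = 1 := Matrix.mem_unitaryGroup_iff.mp hM.eigenvectorUnitary.2
  have key : (L • 1 : Matrix (Fin n) (Fin n) ℝ) - M
      = U * Matrix.diagonal (fun i => L - hM.eigenvalues i) * star U := by
    have hd : Matrix.diagonal (fun i => L - hM.eigenvalues i)
        = (L • 1 : Matrix (Fin n) (Fin n) ℝ) - Matrix.diagonal hM.eigenvalues := by
      rw [Matrix.smul_one_eq_diagonal, Matrix.diagonal_sub]
    rw [hd, mul_sub, sub_mul, auxConjSmulOne hU]
    congr 1
    exact auxSpectral hM
  rw [key, Matrix.star_eq_conjTranspose]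
  exact (Matrix.posSemidef_diagonal_iff.mpr fun i =>
    sub_nonneg.mpr (h i)).mul_mul_conjTranspose_same U

private lemma auxEigLe {M : Matrix (Fin n) (Fin n) ℝ} (hM : M.IsHermitian) {L : ℝ}
    (h : ((L • 1 : Matrix (Fin n) (Fin n) ℝ) - M).PosSemidef) (i : Fin n) :
    hM.eigenvalues i ≤ L := by
  set v : Fin n → ℝ := ⇑(hM.eigenvectorBasis i) with hv
  have hmv : M *ᵥ v = hM.eigenvalues i • v := hM.mulVec_eigenvectorBasis i
  have hvne : v ≠ 0 := by
    intro h0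
    exact hM.eigenvectorBasis.orthonormal.ne_zero i (by ext k; exact congrFun h0 k)
  have hpos : 0 < v ⬝ᵥ v := by
    have := dotProduct_star_self_pos_iff (v := v) |>.mpr hvne
    simpa using this
  have h2 := h.dotProduct_mulVec_nonneg v
  rw [Matrix.sub_mulVec, hmv, Matrix.smul_mulVec, Matrix.one_mulVec] at h2
  simp only [star_trivial, dotProduct_sub, dotProduct_smul, smul_eq_mul] at h2
  nlinarith [hpos, h2]

private lemma auxInvSqPsd {M : Matrix (Fin n) (Fin n) ℝ} (hM : M.PosDef) {L : ℝ} (hL : 0 < L)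
    (h : ∀ i, hM.1.eigenvalues i ≤ L) :
    (M⁻¹ * M⁻¹ - (L ^ 2)⁻¹ • (1 : Matrix (Fin n) (Fin n) ℝ)).PosSemidef := by
  set U := (hM.1.eigenvectorUnitary : Matrix (Fin n) (Fin n) ℝ) with hUdef
  set d := hM.1.eigenvalues with hddef
  have hU : U * star U = 1 := Matrix.mem_unitaryGroup_iff.mp hM.1.eigenvectorUnitary.2
  have hU' : star U * U = 1 := Matrix.mem_unitaryGroup_iff'.mp hM.1.eigenvectorUnitary.2
  have heig : ∀ i, 0 < d i := hM.eigenvalues_pos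
  have hdle : ∀ i, d i ≤ L := h
  have hsp : M = U * Matrix.diagonal d * star U := auxSpectral hM.1
  have hMinv : M⁻¹ = U * Matrix.diagonal (fun i => (d i)⁻¹) * star U := by
    apply Matrix.inv_eq_right_inv
    rw [hsp, auxConjMul hU' d _]
    have : (fun i => d i * (d i)⁻¹) = fun _ => (1 : ℝ) := by
      funext i; exact mul_inv_cancel₀ (heig i).ne'
    rw [this, Matrix.diagonal_one, mul_one, hU]
  have hMinvSq : M⁻¹ * M⁻¹
      = U * Matrix.diagonal (fun i => (d i)⁻¹ * (d i)⁻¹) * star U := by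
    rw [hMinv, auxConjMul hU']
  have hId : (L ^ 2)⁻¹ • (1 : Matrix (Fin n) (Fin n) ℝ)
      = U * ((L ^ 2)⁻¹ • 1) * star U := by
    rw [Matrix.mul_smul, Matrix.smul_mul, mul_one, hU]
  have key : M⁻¹ * M⁻¹ - (L ^ 2)⁻¹ • (1 : Matrix (Fin n) (Fin n) ℝ)
      = U * Matrix.diagonal (fun i => (d i)⁻¹ * (d i)⁻¹ - (L ^ 2)⁻¹) * star U := by
    rw [hMinvSq, hId, ← sub_mul, ← mul_sub]
    congr 2
    rw [Matrix.smul_one_eq_diagonal, Matrix.diagonal_sub]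
  rw [key, Matrix.star_eq_conjTranspose]
  refine (Matrix.posSemidef_diagonal_iff.mpr fun i => ?_).mul_mul_conjTranspose_same U
  have h1 : 0 < d i := heig i
  have h2 : d i ^ 2 ≤ L ^ 2 := by nlinarith [hdle i, h1]
  have h3 : (L ^ 2)⁻¹ ≤ (d i ^ 2)⁻¹ := inv_anti₀ (by positivity) h2
  have h4 : (d i ^ 2)⁻¹ = (d i)⁻¹ * (d i)⁻¹ := by rw [pow_two, mul_inv]
  linarith

private lemma auxMainStep (A Wj : Matrix (Fin n) (Fin n) ℝ) (hA : A.PosDef)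
    (hWj : Wj.PosSemidef) {L : ℝ} (hL : 0 < L)
    (hLB : ((L • 1 : Matrix (Fin n) (Fin n) ℝ) - (A + Wj)).PosSemidef) :
    (A⁻¹).trace - ((A + Wj)⁻¹).trace ≥ Wj.trace / L ^ 2 := by
  set B := A + Wj with hBdef
  have hB : B.PosDef := hA.add_posSemidef hWj
  have hAd : IsUnit A.det := hA.det_pos.ne'.isUnit
  have hBd : IsUnit B.det := hB.det_pos.ne'.isUnit
  have hAinv : A * A⁻¹ = 1 := Matrix.mul_nonsing_inv A hAd
  have hAinv' : A⁻¹ * A = 1 := Matrix.nonsing_inv_mul A hAd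
  have hBinv : B * B⁻¹ = 1 := Matrix.mul_nonsing_inv B hBd
  have hBinv' : B⁻¹ * B = 1 := Matrix.nonsing_inv_mul B hBd
  have id2 : A⁻¹ = B⁻¹ + A⁻¹ * Wj * B⁻¹ := by
    calc A⁻¹ = A⁻¹ * B * B⁻¹ := by rw [mul_assoc, hBinv, mul_one]
      _ = A⁻¹ * (A + Wj) * B⁻¹ := rfl
      _ = (1 + A⁻¹ * Wj) * B⁻¹ := by rw [mul_add, hAinv']
      _ = B⁻¹ + A⁻¹ * Wj * B⁻¹ := by rw [add_mul, one_mul]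
  have id1 : A⁻¹ = B⁻¹ + B⁻¹ * Wj * A⁻¹ := by
    calc A⁻¹ = B⁻¹ * B * A⁻¹ := by rw [hBinv', one_mul]
      _ = B⁻¹ * (A + Wj) * A⁻¹ := rfl
      _ = B⁻¹ * A * A⁻¹ + B⁻¹ * Wj * A⁻¹ := by rw [mul_add, add_mul]
      _ = B⁻¹ + B⁻¹ * Wj * A⁻¹ := by rw [mul_assoc, hAinv, mul_one]
  have e1 : A⁻¹ - B⁻¹ = B⁻¹ * Wj * A⁻¹ := by
    nth_rewrite 1 [id1]
    exact add_sub_cancel_left _ _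
  have e2 : A⁻¹ - B⁻¹ = B⁻¹ * Wj * B⁻¹ + B⁻¹ * Wj * (A⁻¹ * Wj * B⁻¹) := by
    rw [e1]
    nth_rewrite 1 [id2]
    rw [mul_add, ← mul_assoc, ← mul_assoc]
  have hR : (B⁻¹ * Wj * (A⁻¹ * Wj * B⁻¹)).PosSemidef := by
    have h0 := hA.inv.posSemidef.mul_mul_conjTranspose_same (B⁻¹ * Wj)
    have hct : (B⁻¹ * Wj)ᴴ = Wj * B⁻¹ := by
      rw [Matrix.conjTranspose_mul, hWj.1.eq, hB.inv.1.eq]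
    rw [hct] at h0
    have : B⁻¹ * Wj * A⁻¹ * (Wj * B⁻¹) = B⁻¹ * Wj * (A⁻¹ * Wj * B⁻¹) := by
      noncomm_ring
    rwa [this] at h0
  have eig := auxEigLe hB.1 hLB
  have psd := auxInvSqPsd hB hL eig
  have tr1 : 0 ≤ ((B⁻¹ * B⁻¹ - (L ^ 2)⁻¹ • 1) * Wj).trace := auxPsdTraceMulNonneg psd hWj
  have tr2 : ((B⁻¹ * B⁻¹ - (L ^ 2)⁻¹ • 1) * Wj).trace
      = (B⁻¹ * Wj * B⁻¹).trace - (L ^ 2)⁻¹ * Wj.trace := by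
    rw [sub_mul, Matrix.smul_mul, one_mul, Matrix.trace_sub, Matrix.trace_smul,
      Matrix.trace_mul_cycle, Matrix.trace_mul_cycle, smul_eq_mul]
  have tr3 : (A⁻¹).trace - (B⁻¹).trace
      = (B⁻¹ * Wj * B⁻¹).trace + (B⁻¹ * Wj * (A⁻¹ * Wj * B⁻¹)).trace := by
    rw [← Matrix.trace_sub, ← Matrix.trace_add, ← e2]
  have tr4 : 0 ≤ (B⁻¹ * Wj * (A⁻¹ * Wj * B⁻¹)).trace := auxPsdTraceNonneg hR
  have hdiv : Wj.trace / L ^ 2 = (L ^ 2)⁻¹ * Wj.trace := by rw [div_eq_inv_mul]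
  linarith

end Aux

/-- Removing `j ∈ S \ Ω` from `S ∪ Ω`: the decrease of `tr(W̄⁻¹)` is at least
`tr(W_j) / λ_max(W̄_V)² ≥ (min_ω tr(W_ω)) / λ_max(W̄_V)²`, where
`W̄_S = W₀ + ∑_{ω ∈ S} W_ω`. -/
theorem trace_inv_gramian_curvature_numerator_bound
    {n : ℕ} {V : Type*} [Fintype V] [DecidableEq V] [Nonempty V]
    (W₀ : Matrix (Fin n) (Fin n) ℝ) (hW₀ : W₀.PosDef)
    (W : V → Matrix (Fin n) (Fin n) ℝ) (hW : ∀ ω, (W ω).PosSemidef) :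
    ∀ Ω S : Finset V, ∀ j ∈ S \ Ω,
      ((W₀ + ∑ i ∈ (S.erase j) ∪ Ω, W i)⁻¹).trace - ((W₀ + ∑ i ∈ S ∪ Ω, W i)⁻¹).trace ≥
        (W j).trace / (lambdaMax (W₀ + ∑ i ∈ (Finset.univ : Finset V), W i)) ^ 2 ∧
      (W j).trace / (lambdaMax (W₀ + ∑ i ∈ (Finset.univ : Finset V), W i)) ^ 2 ≥
        (⨅ ω : V, (W ω).trace) /
          (lambdaMax (W₀ + ∑ i ∈ (Finset.univ : Finset V), W i)) ^ 2 := by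
  intro Ω S j hj
  rw [Finset.mem_sdiff] at hj
  obtain ⟨hjS, hjΩ⟩ := hj
  have hPsdSum : ∀ s : Finset V, (∑ i ∈ s, W i).PosSemidef := fun s =>
    Finset.sum_induction W _ (fun a b ha hb => ha.add hb) Matrix.PosSemidef.zero
      (fun i _ => hW i)
  have hT : (W₀ + ∑ i ∈ (Finset.univ : Finset V), W i).PosDef := hW₀.add_posSemidef (hPsdSum _)
  have hherm : (W₀ + ∑ i ∈ (Finset.univ : Finset V), W i).IsHermitian := hT.1
  have hlam : lambdaMax (W₀ + ∑ i ∈ (Finset.univ : Finset V), W i)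
      = ⨆ i, hherm.eigenvalues i := by
    unfold lambdaMax
    rw [dif_pos hherm]
  rcases Nat.eq_zero_or_pos n with hn | hn
  · subst hn
    have htr : ∀ M : Matrix (Fin 0) (Fin 0) ℝ, M.trace = 0 := fun M => by
      simp [Matrix.trace]
    have hinf : (⨅ ω : V, (W ω).trace) = 0 := by
      simp only [htr]
      exact ciInf_const
    constructor
    · simp [htr]
    · simp [htr, hinf]
  · have hne : Nonempty (Fin n) := ⟨⟨0, hn⟩⟩
    have hbdd : BddAbove (Set.range hherm.eigenvalues) := (Set.finite_range _).bddAbove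
    have hle : ∀ i, hherm.eigenvalues i
        ≤ lambdaMax (W₀ + ∑ i ∈ (Finset.univ : Finset V), W i) := fun i => by
      rw [hlam]; exact le_ciSup hbdd i
    have hL : 0 < lambdaMax (W₀ + ∑ i ∈ (Finset.univ : Finset V), W i) :=
      lt_of_lt_of_le (hT.eigenvalues_pos (Classical.arbitrary _)) (hle _)
    have hLT : ((lambdaMax (W₀ + ∑ i ∈ (Finset.univ : Finset V), W i) •
        1 : Matrix (Fin n) (Fin n) ℝ) - (W₀ + ∑ i ∈ (Finset.univ : Finset V), W i)).PosSemidef :=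
      auxSmulOneSubPsd hherm hle
    have hnot : j ∉ S.erase j ∪ Ω := by simp [hjΩ]
    have hins : insert j (S.erase j ∪ Ω) = S ∪ Ω := by
      rw [← Finset.insert_union, Finset.insert_erase hjS]
    have hsum : ∑ i ∈ S ∪ Ω, W i = W j + ∑ i ∈ S.erase j ∪ Ω, W i := by
      rw [← hins, Finset.sum_insert hnot]
    have hAB : W₀ + ∑ i ∈ S ∪ Ω, W i = (W₀ + ∑ i ∈ S.erase j ∪ Ω, W i) + W j := by
      rw [hsum]; abel
    have hA' : (W₀ + ∑ i ∈ S.erase j ∪ Ω, W i).PosDef := hW₀.add_posSemidef (hPsdSum _)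
    have hTB : (W₀ + ∑ i ∈ (Finset.univ : Finset V), W i) - (W₀ + ∑ i ∈ S ∪ Ω, W i)
        = ∑ i ∈ Finset.univ \ (S ∪ Ω), W i := by
      rw [add_sub_add_left_eq_sub]
      exact (eq_sub_of_add_eq (Finset.sum_sdiff (Finset.subset_univ _))).symm
    have hLB : ((lambdaMax (W₀ + ∑ i ∈ (Finset.univ : Finset V), W i) •
        1 : Matrix (Fin n) (Fin n) ℝ)
        - ((W₀ + ∑ i ∈ S.erase j ∪ Ω, W i) + W j)).PosSemidef := by
      rw [← hAB, show (lambdaMax (W₀ + ∑ i ∈ (Finset.univ : Finset V), W i) •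
          1 : Matrix (Fin n) (Fin n) ℝ) - (W₀ + ∑ i ∈ S ∪ Ω, W i)
          = ((lambdaMax (W₀ + ∑ i ∈ (Finset.univ : Finset V), W i) •
            1 : Matrix (Fin n) (Fin n) ℝ) - (W₀ + ∑ i ∈ (Finset.univ : Finset V), W i))
            + ((W₀ + ∑ i ∈ (Finset.univ : Finset V), W i) - (W₀ + ∑ i ∈ S ∪ Ω, W i)) by
        rw [sub_add_sub_cancel]]
      exact hLT.add (hTB ▸ hPsdSum _)
    constructor
    · have hmain := auxMainStep _ (W j) hA' (hW j) hL hLB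
      rwa [← hAB] at hmain
    · have hinf : (⨅ ω : V, (W ω).trace) ≤ (W j).trace :=
        ciInf_le (Set.finite_range _).bddBelow j
      rw [ge_iff_le, div_eq_mul_inv, div_eq_mul_inv]
      exact mul_le_mul_of_nonneg_right hinf (by positivity)
end
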